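/- With the towers E_k, F_k as above (E_{k+1} = B^{-1}(F_k), F_{k+1} = A(E_{k+1}), E_0 = F_0 = 0) and N the stabilization index, there exist complements E' of E_N in E and F' of F_N in F such that A(E') ⊆ F' and B(E') ⊆ F'. -/

import Mathlib

open Submodule

section AuxKron

variable {K E F : Type*} [Field K] [AddCommGroup E] [Module K E]
    [AddCommGroup F] [Module K F]

private lemma kron_exists_relCompl (p q : Submodule K E) (hpq : p ≤ q) :
    ∃ r, r ≤ q ∧ p ⊓ r = ⊥ ∧ p ⊔ r = q := by
  obtain ⟨c, hc⟩ := Submodule.exists_isCompl p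
  refine ⟨c ⊓ q, inf_le_right, ?_, ?_⟩
  · rw [← inf_assoc, hc.disjoint.eq_bot, bot_inf_eq]
  · rw [← sup_inf_assoc_of_le _ hpq, hc.codisjoint.eq_top, top_inf_eq]

private lemma kron_step (A B : E →ₗ[K] F) (Es : ℕ → Submodule K E) (Fs : ℕ → Submodule K F)
    (hE : ∀ k, Es (k + 1) = (Fs k).comap B)
    (hF : ∀ k, Fs (k + 1) = (Es (k + 1)).map A)
    (N : ℕ)
    (hmE : ∀ i j, i ≤ j → Es i ≤ Es j) (hmF : ∀ i j, i ≤ j → Fs i ≤ Fs j)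
    (hEleN : ∀ i, i ≤ N + 1 → Es i ≤ Es N)
    (hAE : ∀ k, (Es k).map A ≤ Fs k) (hBE : ∀ k, (Es k).map B ≤ Fs k)
    (k : ℕ) (hkN : k + 1 ≤ N)
    (E'' : Submodule K E) (F'' : Submodule K F)
    (hE''1 : Es (k+1) ≤ E'') (hE''2 : E'' ⊓ Es N = Es (k+1)) (hE''3 : E'' ⊔ Es N = ⊤)
    (hF''1 : Fs (k+1) ≤ F'') (hF''2 : F'' ⊓ Fs N = Fs (k+1)) (hF''3 : F'' ⊔ Fs N = ⊤)
    (hA'' : E''.map A ≤ F'') (hB'' : E''.map B ≤ F'') :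
    ∃ E' F', Es k ≤ E' ∧ E' ⊓ Es N = Es k ∧ E' ⊔ Es N = ⊤ ∧
      Fs k ≤ F' ∧ F' ⊓ Fs N = Fs k ∧ F' ⊔ Fs N = ⊤ ∧
      E'.map A ≤ F' ∧ E'.map B ≤ F' := by
  -- D : complement of Es (k+1) in E''
  obtain ⟨D, hD1, hD2, hD3⟩ := kron_exists_relCompl (Es (k+1)) E'' hE''1
  set g : Submodule K F := D.map B with hgdef
  have hgF'' : g ≤ F'' := le_trans (map_mono hD1) hB''
  -- g ⊓ Fs (k+1) = ⊥
  have hgm : g ⊓ Fs (k+1) = ⊥ := by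
    rw [eq_bot_iff]
    rintro y hy
    obtain ⟨hy1, hy2⟩ := mem_inf.mp hy
    obtain ⟨d, hd, rfl⟩ := hy1
    have hd2 : d ∈ Es (k+2) := by rw [hE (k+1)]; exact hy2
    have hdN : d ∈ Es N := hEleN (k+2) (by omega) hd2
    have hdk1 : d ∈ Es (k+1) := by rw [← hE''2]; exact mem_inf.mpr ⟨hD1 hd, hdN⟩
    have hd0 : d ∈ Es (k+1) ⊓ D := mem_inf.mpr ⟨hdk1, hd⟩
    rw [hD2] at hd0
    simp only [mem_bot] at hd0
    simp [hd0]
  -- c : complement of Fs k in Fs (k+1)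
  obtain ⟨c, hcm, hac, hacm⟩ :=
    kron_exists_relCompl (Fs k) (Fs (k+1)) (hmF k (k+1) (by omega))
  -- h : complement of Fs (k+1) ⊔ g in F''
  have hmg_le : Fs (k+1) ⊔ g ≤ F'' := sup_le hF''1 hgF''
  obtain ⟨h, hhF, hmgh, hmghsup⟩ := kron_exists_relCompl (Fs (k+1) ⊔ g) F'' hmg_le
  -- r : complement of F'' in F
  obtain ⟨r, hr⟩ := Submodule.exists_isCompl F''
  set F' : Submodule K F := Fs k ⊔ g ⊔ h with hF'def
  have hF'leF'' : F' ≤ F'' :=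
    sup_le (sup_le (le_trans (hmF k (k+1) (by omega)) hF''1) hgF'') hhF
  -- key lattice identity : F' ⊓ Fs (k+1) = Fs k
  have hgh_m : (g ⊔ h) ⊓ Fs (k+1) = ⊥ := by
    have h1 : (g ⊔ h) ⊓ (Fs (k+1) ⊔ g) = g := by
      rw [sup_inf_assoc_of_le h (le_sup_right : g ≤ Fs (k+1) ⊔ g)]
      have : h ⊓ (Fs (k+1) ⊔ g) = ⊥ := by rw [inf_comm]; exact hmgh
      rw [this, sup_bot_eq]
    have h2 : (g ⊔ h) ⊓ Fs (k+1) ≤ g := by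
      calc (g ⊔ h) ⊓ Fs (k+1) ≤ (g ⊔ h) ⊓ (Fs (k+1) ⊔ g) := inf_le_inf_left _ le_sup_left
        _ = g := h1
    rw [eq_bot_iff, ← hgm]
    exact le_inf h2 inf_le_right
  have hF'm : F' ⊓ Fs (k+1) = Fs k := by
    have : F' = Fs k ⊔ (g ⊔ h) := by rw [hF'def, sup_assoc]
    rw [this, sup_inf_assoc_of_le (g ⊔ h) (hmF k (k+1) (by omega)), hgh_m, sup_bot_eq]
  -- the projection decomposition
  set C1c : Submodule K F := F' ⊔ r with hC1cdef
  have hcF'' : c ≤ F'' := le_trans hcm hF''1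
  have hC1cF'' : C1c ⊓ F'' = F' := by
    rw [hC1cdef, sup_inf_assoc_of_le r hF'leF'', hr.disjoint.symm.eq_bot, sup_bot_eq]
  have hdisj : c ⊓ C1c = ⊥ := by
    rw [eq_bot_iff, ← hac]
    refine le_inf ?_ inf_le_left
    have s1 : c ⊓ C1c ≤ F' := by
      calc c ⊓ C1c ≤ F'' ⊓ C1c := inf_le_inf_right _ hcF''
        _ = F' := by rw [inf_comm]; exact hC1cF''
    calc c ⊓ C1c ≤ Fs (k+1) ⊓ F' := le_inf (le_trans inf_le_left hcm) s1
      _ = Fs k := by rw [inf_comm]; exact hF'm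
  have hcodis : c ⊔ C1c = ⊤ := by
    have h1 : c ⊔ F' = F'' := by
      apply le_antisymm (sup_le (le_trans hcm hF''1) hF'leF'')
      rw [← hmghsup]
      refine sup_le (sup_le ?_ ?_) ?_
      · rw [← hacm]
        exact sup_le (le_sup_of_le_right (le_sup_of_le_left le_sup_left)) le_sup_left
      · exact le_sup_of_le_right (le_sup_of_le_left le_sup_right)
      · exact le_sup_of_le_right le_sup_right
    rw [hC1cdef, ← sup_assoc, h1, hr.codisjoint.eq_top]
  have hcompl : IsCompl c C1c := ⟨disjoint_iff.mpr hdisj, codisjoint_iff.mpr hcodis⟩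
  set π : F →ₗ[K] c := c.projectionOnto C1c hcompl with hπdef
  have hπmem : ∀ y : F, y - (π y : F) ∈ C1c := by
    intro y
    have hy : y ∈ c ⊔ C1c := by rw [hcodis]; trivial
    obtain ⟨u, hu, v, hv, rfl⟩ := mem_sup.mp hy
    have hπu : π (u + v) = ⟨u, hu⟩ := by
      rw [map_add, projectionOnto_apply_of_mem_right hcompl hv, add_zero]
      exact projectionOnto_apply_left hcompl ⟨u, hu⟩
    rw [hπu]
    simpa using hv
  -- section of A : Es (k+1) ↠ Fs (k+1)
  have hA1 : ∀ x ∈ Es (k+1), A x ∈ Fs (k+1) := fun x hx => by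
    rw [hF k]; exact mem_map_of_mem hx
  set A₁ : Es (k+1) →ₗ[K] Fs (k+1) := A.restrict hA1 with hA₁def
  have hA₁surj : LinearMap.range A₁ = ⊤ := by
    rw [LinearMap.range_eq_top]
    rintro ⟨y, hy⟩
    rw [hF k] at hy
    obtain ⟨x, hx, rfl⟩ := hy
    exact ⟨⟨x, hx⟩, rfl⟩
  obtain ⟨s₁, hs₁⟩ := A₁.exists_rightInverse_of_surjective hA₁surj
  have hc_le_m : c ≤ Fs (k+1) := hcm
  set θ : E →ₗ[K] E :=
    (Es (k+1)).subtype ∘ₗ s₁ ∘ₗ Submodule.inclusion hc_le_m ∘ₗ π ∘ₗ A with hθdef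
  have hθmem : ∀ x : E, θ x ∈ Es (k+1) := by
    intro x
    simp only [hθdef, LinearMap.comp_apply, Submodule.subtype_apply]
    exact SetLike.coe_mem _
  have hθA : ∀ x : E, A (θ x) = (π (A x) : F) := by
    intro x
    simp only [hθdef, LinearMap.comp_apply, Submodule.subtype_apply]
    have h2 : A₁ (s₁ (Submodule.inclusion hc_le_m (π (A x)))) =
        Submodule.inclusion hc_le_m (π (A x)) := by
      rw [← LinearMap.comp_apply, hs₁, LinearMap.id_apply]
    have h1 : (A₁ (s₁ (Submodule.inclusion hc_le_m (π (A x)))) : F) =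
        A ((s₁ (Submodule.inclusion hc_le_m (π (A x)))) : E) := rfl
    rw [← h1, h2]
    rfl
  set ρ : E →ₗ[K] E := LinearMap.id - θ with hρdef
  have hρ_apply : ∀ x : E, ρ x = x - θ x := fun x => rfl
  set E' : Submodule K E := Es k ⊔ D.map ρ with hE'def
  have hE'leE'' : E' ≤ E'' := by
    apply sup_le (le_trans (hmE k (k+1) (by omega)) hE''1)
    rintro _ ⟨d, hd, rfl⟩
    rw [hρ_apply]
    exact sub_mem (hD1 hd) (hE''1 (hθmem d))
  refine ⟨E', F', le_sup_left, ?_, ?_, le_sup_of_le_left le_sup_left, ?_, ?_, ?_, ?_⟩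
  · -- E' ⊓ Es N = Es k
    have step1 : E' ⊓ Es N = E' ⊓ Es (k+1) := by
      rw [← hE''2, ← inf_assoc, inf_of_le_left hE'leE'']
    rw [step1]
    apply le_antisymm
    · rintro x hx
      obtain ⟨hx1, hx2⟩ := mem_inf.mp hx
      obtain ⟨e, he, z, hz, rfl⟩ := mem_sup.mp hx1
      obtain ⟨d, hd, rfl⟩ := hz
      have hdmem : d ∈ Es (k+1) := by
        have : d = (e + ρ d) - e + θ d := by rw [hρ_apply]; abel
        rw [this]
        exact add_mem (sub_mem hx2 (hmE k (k+1) (by omega) he)) (hθmem d)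
      have hd0 : d ∈ Es (k+1) ⊓ D := mem_inf.mpr ⟨hdmem, hd⟩
      rw [hD2] at hd0
      simp only [mem_bot] at hd0
      simpa [hd0] using he
    · exact le_inf le_sup_left (hmE k (k+1) (by omega))
  · -- E' ⊔ Es N = ⊤
    rw [eq_top_iff, ← hE''3]
    refine sup_le ?_ le_sup_right
    rw [← hD3]
    refine sup_le (le_sup_of_le_right (hEleN (k+1) (by omega))) ?_
    intro d hd
    have hd' : ρ d + θ d = d := by rw [hρ_apply]; abel
    rw [← hd']
    exact add_mem (mem_sup_left (mem_sup_right ⟨d, hd, rfl⟩))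
      (mem_sup_right (hEleN (k+1) (by omega) (hθmem d)))
  · -- F' ⊓ Fs N = Fs k
    rw [← inf_of_le_left hF'leF'', inf_assoc, hF''2, hF'm]
  · -- F' ⊔ Fs N = ⊤
    rw [eq_top_iff, ← hF''3]
    refine sup_le ?_ le_sup_right
    rw [← hmghsup]
    refine sup_le (sup_le ?_ ?_) ?_
    · exact le_sup_of_le_right (hmF (k+1) N hkN)
    · exact le_sup_of_le_left (le_sup_of_le_left le_sup_right)
    · exact le_sup_of_le_left le_sup_right
  · -- A maps E' into F'
    rw [hE'def, Submodule.map_sup]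
    refine sup_le (le_trans (hAE k) (le_sup_of_le_left le_sup_left)) ?_
    rw [map_le_iff_le_comap]
    rintro _ ⟨d, hd, rfl⟩
    rw [mem_comap, hρ_apply, map_sub, hθA]
    have hm1 : A d - (π (A d) : F) ∈ C1c := hπmem (A d)
    have hm2 : A d - (π (A d) : F) ∈ F'' := by
      refine sub_mem (hA'' (mem_map_of_mem (hD1 hd))) (hF''1 (hc_le_m ?_))
      exact SetLike.coe_mem _
    rw [← hC1cF'']
    exact mem_inf.mpr ⟨hm1, hm2⟩
  · -- B maps E' into F'
    have hBk1 : (Es (k+1)).map B ≤ Fs k := by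
      rw [hE k]; exact map_comap_le B (Fs k)
    rw [hE'def, Submodule.map_sup]
    refine sup_le (le_trans (hBE k) (le_sup_of_le_left le_sup_left)) ?_
    rw [map_le_iff_le_comap]
    rintro _ ⟨d, hd, rfl⟩
    rw [mem_comap, hρ_apply, map_sub]
    refine sub_mem ?_ ?_
    · exact mem_sup_left (mem_sup_right (mem_map_of_mem hd))
    · exact mem_sup_left (mem_sup_left (hBk1 (mem_map_of_mem (hθmem d))))

end AuxKron

/-- With the towers as above and `N` the stabilization index, there exist complements
`E'` of `E_N` and `F'` of `F_N` with `A(E') ⊆ F'` and `B(E') ⊆ F'`. -/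
theorem stmt_12 {K E F : Type*} [Field K] [AddCommGroup E] [Module K E]
    [AddCommGroup F] [Module K F] [FiniteDimensional K E] [FiniteDimensional K F]
    (A B : E →ₗ[K] F)
    (hker : LinearMap.ker A ⊓ LinearMap.ker B = ⊥)
    (hrange : LinearMap.range A ⊔ LinearMap.range B = ⊤)
    (Es : ℕ → Submodule K E) (Fs : ℕ → Submodule K F)
    (hE0 : Es 0 = ⊥) (hF0 : Fs 0 = ⊥)
    (hE : ∀ k, Es (k + 1) = (Fs k).comap B)
    (hF : ∀ k, Fs (k + 1) = (Es (k + 1)).map A)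
    (N : ℕ) (hN : Es (N + 1) = Es N) :
    ∃ (E' : Submodule K E) (F' : Submodule K F),
      IsCompl (Es N) E' ∧ IsCompl (Fs N) F' ∧
        E'.map A ≤ F' ∧ E'.map B ≤ F' := by
  classical
  have hstep : ∀ k, Es k ≤ Es (k+1) ∧ Fs k ≤ Fs (k+1) := by
    intro k
    induction k with
    | zero => exact ⟨hE0 ▸ bot_le, hF0 ▸ bot_le⟩
    | succ k ih =>
      have h1 : Es (k+1) ≤ Es (k+2) := by
        rw [hE k, hE (k+1)]; exact Submodule.comap_mono ih.2
      exact ⟨h1, by rw [hF k, hF (k+1)]; exact Submodule.map_mono h1⟩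
  have hmE : ∀ i j, i ≤ j → Es i ≤ Es j := fun i j hij =>
    monotone_nat_of_le_succ (fun n => (hstep n).1) hij
  have hmF : ∀ i j, i ≤ j → Fs i ≤ Fs j := fun i j hij =>
    monotone_nat_of_le_succ (fun n => (hstep n).2) hij
  have hEleN : ∀ i, i ≤ N + 1 → Es i ≤ Es N := by
    intro i hi
    rcases Nat.lt_or_ge i (N+1) with hlt | hge
    · exact hmE i N (by omega)
    · have : i = N + 1 := by omega
      rw [this, hN]
  have hAE : ∀ k, (Es k).map A ≤ Fs k := by
    intro k
    cases k with
    | zero => rw [hE0, Submodule.map_bot]; exact bot_le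
    | succ k => rw [hF k]
  have hBE : ∀ k, (Es k).map B ≤ Fs k := by
    intro k
    cases k with
    | zero => rw [hE0, Submodule.map_bot]; exact bot_le
    | succ k =>
      rw [hE k]
      exact le_trans (Submodule.map_comap_le B (Fs k)) (hmF k (k+1) (by omega))
  -- downward induction
  have key : ∀ m : ℕ, m ≤ N →
      ∃ E' F', Es (N - m) ≤ E' ∧ E' ⊓ Es N = Es (N - m) ∧ E' ⊔ Es N = ⊤ ∧
        Fs (N - m) ≤ F' ∧ F' ⊓ Fs N = Fs (N - m) ∧ F' ⊔ Fs N = ⊤ ∧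
        E'.map A ≤ F' ∧ E'.map B ≤ F' := by
    intro m
    induction m with
    | zero =>
      intro _
      refine ⟨⊤, ⊤, le_top, ?_, ?_, le_top, ?_, ?_, le_top, le_top⟩ <;>
        simp [Nat.sub_zero]
    | succ m ih =>
      intro hm
      obtain ⟨E'', F'', h1, h2, h3, h4, h5, h6, h7, h8⟩ := ih (by omega)
      have heq : N - m = (N - (m+1)) + 1 := by omega
      rw [heq] at h1 h2 h4 h5
      exact kron_step A B Es Fs hE hF N hmE hmF hEleN hAE hBE (N - (m+1)) (by omega)
        E'' F'' h1 h2 h3 h4 h5 h6 h7 h8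
  obtain ⟨E', F', _, h2, h3, _, h5, h6, h7, h8⟩ := key N le_rfl
  rw [Nat.sub_self] at h2 h5
  refine ⟨E', F', ?_, ?_, h7, h8⟩
  · exact ⟨disjoint_iff.mpr (by rw [inf_comm, h2, hE0]),
      codisjoint_iff.mpr (by rw [sup_comm, h3])⟩
  · exact ⟨disjoint_iff.mpr (by rw [inf_comm, h5, hF0]),
      codisjoint_iff.mpr (by rw [sup_comm, h6])⟩
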